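/- arXiv:1504.01492 — 2 statements merged into one kernel-verified Lean document; each statement's English description precedes it below -/
import Mathlib

section
/- Let F be a set of n×n real symmetric positive semidefinite matrices, each having trace exactly η > 0, let A be an n×n real symmetric matrix. Define p(Y) = ⟨Y, A⟩ and, for γ > 0, p_γ(Y) = p(Y) + (1/(2γ))(‖Y‖_F² − η²). Suppose Y⋆ ∈ F satisfies p(Y⋆) ≤ p(Y) for all Y ∈ F, and for each γ > 0 a matrix Y_γ ∈ F is given satisfying p_γ(Y_γ) ≤ p_γ(Y) for all Y ∈ F. Then for every ε > 0 there exists γ > 0 such that |p(Y⋆) − p(Y_γ)| ≤ ε. -/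
open Matrix

lemma psd_quad_aux {n : ℕ} {Y : Matrix (Fin n) (Fin n) ℝ} (hY : Y.PosSemidef) (i j : Fin n)
    (t : ℝ) : 0 ≤ Y j j * (t * t) + (2 * Y i j) * t + Y i i := by
  set x : Fin n → ℝ := fun a => (if a = i then 1 else 0) + t * (if a = j then 1 else 0) with hx
  have h := (posSemidef_iff_dotProduct_mulVec.mp hY).2 x
  have hs : Y i j = Y j i := by
    have := hY.1.apply i j; simpa using this.symm
  by_cases hij : i = j
  · subst hij
    simp [hx, dotProduct, mulVec, Finset.mul_sum, mul_add, add_mul, mul_ite, ite_mul,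
      Finset.sum_add_distrib, Finset.sum_ite_eq, Finset.sum_ite_eq'] at h
    nlinarith [h]
  · simp [hx, dotProduct, mulVec, Finset.mul_sum, mul_add, add_mul, mul_ite, ite_mul,
      Finset.sum_add_distrib, Finset.sum_ite_eq, Finset.sum_ite_eq', hij, Ne.symm hij] at h
    rw [← hs] at h; nlinarith [h]

lemma psd_entry_sq_le {n : ℕ} {Y : Matrix (Fin n) (Fin n) ℝ} (hY : Y.PosSemidef) (i j : Fin n) :
    Y i j ^ 2 ≤ Y i i * Y j j := by
  have h := discrim_le_zero (a := Y j j) (b := 2 * Y i j) (c := Y i i) (psd_quad_aux hY i j)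
  rw [discrim] at h
  nlinarith [h]

lemma psd_trace_sq_le {n : ℕ} {Y : Matrix (Fin n) (Fin n) ℝ} (hY : Y.PosSemidef) :
    (Yᵀ * Y).trace ≤ Y.trace ^ 2 := by
  have h : (Yᵀ * Y).trace = ∑ i, ∑ j, Y j i * Y j i := by
    simp [Matrix.trace, Matrix.diag, Matrix.mul_apply]
  have h2 : Y.trace ^ 2 = ∑ i, ∑ j, Y i i * Y j j := by
    rw [Matrix.trace, sq, Finset.sum_mul_sum]
    rfl
  rw [h, h2]
  apply Finset.sum_le_sum
  intro i _
  apply Finset.sum_le_sum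
  intro j _
  have := psd_entry_sq_le hY j i
  nlinarith [this]

lemma trace_mul_self_nonneg {n : ℕ} (Y : Matrix (Fin n) (Fin n) ℝ) :
    0 ≤ (Yᵀ * Y).trace := by
  have h : (Yᵀ * Y).trace = ∑ i, ∑ j, Y j i * Y j i := by
    simp [Matrix.trace, Matrix.diag, Matrix.mul_apply]
  rw [h]
  apply Finset.sum_nonneg; intro i _
  apply Finset.sum_nonneg; intro j _
  exact mul_self_nonneg _

/-- Proposition 1(i): for every ε > 0 there is a penalty parameter γ > 0 such
that the minimizer of the penalized SDP has objective value within ε of the SDP optimum. -/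
theorem penalized_sdp_approx {n : ℕ} (F : Set (Matrix (Fin n) (Fin n) ℝ))
    (A : Matrix (Fin n) (Fin n) ℝ) (hA : A.IsSymm)
    (η : ℝ) (hη : 0 < η)
    (hF : ∀ Y ∈ F, Y.PosSemidef ∧ Y.trace = η)
    (p : Matrix (Fin n) (Fin n) ℝ → ℝ)
    (hp : ∀ Y, p Y = (Yᵀ * A).trace)
    (pγ : ℝ → Matrix (Fin n) (Fin n) ℝ → ℝ)
    (hpγ : ∀ γ, 0 < γ → ∀ Y, pγ γ Y = p Y + (1 / (2 * γ)) * ((Yᵀ * Y).trace - η ^ 2))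
    (Ystar : Matrix (Fin n) (Fin n) ℝ)
    (hYstar : Ystar ∈ F) (hmin : ∀ Y ∈ F, p Ystar ≤ p Y)
    (Yγ : ℝ → Matrix (Fin n) (Fin n) ℝ)
    (hYγ : ∀ γ, 0 < γ → Yγ γ ∈ F)
    (hminγ : ∀ γ, 0 < γ → ∀ Y ∈ F, pγ γ (Yγ γ) ≤ pγ γ Y) :
    ∀ ε : ℝ, 0 < ε → ∃ γ : ℝ, 0 < γ ∧ |p Ystar - p (Yγ γ)| ≤ ε := by
  intro ε hε
  set γ : ℝ := η ^ 2 / (2 * ε) with hγdef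
  have hγ : 0 < γ := by positivity
  refine ⟨γ, hγ, ?_⟩
  have hYg := hYγ γ hγ
  obtain ⟨hYgP, hYgT⟩ := hF _ hYg
  obtain ⟨hYsP, hYsT⟩ := hF _ hYstar
  -- traces of squares bounded by η²
  have hTg_le : ((Yγ γ)ᵀ * Yγ γ).trace ≤ η ^ 2 := by
    have := psd_trace_sq_le hYgP; rwa [hYgT] at this
  have hTs_le : (Ystarᵀ * Ystar).trace ≤ η ^ 2 := by
    have := psd_trace_sq_le hYsP; rwa [hYsT] at this
  have hTg_nn : 0 ≤ ((Yγ γ)ᵀ * Yγ γ).trace := trace_mul_self_nonneg _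
  -- minimality chain
  have h1 : pγ γ (Yγ γ) ≤ pγ γ Ystar := hminγ γ hγ Ystar hYstar
  rw [hpγ γ hγ, hpγ γ hγ] at h1
  have h2 : p Ystar ≤ p (Yγ γ) := hmin _ hYg
  have hc : 0 < 1 / (2 * γ) := by positivity
  have hkey : p (Yγ γ) - p Ystar ≤ (1 / (2 * γ)) * η ^ 2 := by
    nlinarith [mul_le_mul_of_nonneg_left hTs_le (le_of_lt hc),
      mul_le_mul_of_nonneg_left hTg_nn (le_of_lt hc)]
  have hval : (1 / (2 * γ)) * η ^ 2 = ε := by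
    rw [hγdef]; field_simp
  rw [abs_le]
  constructor <;> nlinarith [hkey, h2, hval]
end

section
/- Let A, B₁, …, B_q be n×n real symmetric matrices, b ∈ ℝ^q, γ > 0 and η ∈ ℝ. For u ∈ ℝ^q set C(u) := −A − Σ_{i=1}^q uᵢBᵢ, and let P : ℝ^q → (n×n real matrices) assign to each u the positive part of C(u), i.e. for every u: P(u) is PSD, P(u) − C(u) is PSD, and ⟨P(u), P(u) − C(u)⟩ = 0. Then the function d_γ(u) := −(γ/2)‖P(u)‖_F² − uᵀb − η²/(2γ) is concave on ℝ^q. -/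
open Matrix

lemma trace_transpose_mul_self_nonneg {n : ℕ} (Z : Matrix (Fin n) (Fin n) ℝ) :
    0 ≤ (Zᵀ * Z).trace := by
  rw [Matrix.trace]
  apply Finset.sum_nonneg
  intro i _
  simp only [Matrix.diag_apply, Matrix.mul_apply, Matrix.transpose_apply]
  exact Finset.sum_nonneg fun j _ => mul_self_nonneg _

lemma psd_transpose_eq {n : ℕ} {X : Matrix (Fin n) (Fin n) ℝ} (h : X.PosSemidef) :
    Xᵀ = X := by
  have := h.1
  rwa [Matrix.IsHermitian, Matrix.conjTranspose_eq_transpose_of_trivial] at this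

lemma trace_mul_psd_nonneg {n : ℕ} {X Y : Matrix (Fin n) (Fin n) ℝ}
    (hX : X.PosSemidef) (hY : Y.PosSemidef) : 0 ≤ (X * Y).trace := by
  obtain ⟨S, hS, hSX⟩ : ∃ S : Matrix (Fin n) (Fin n) ℝ, Sᵀ = S ∧ S * S = X :=
    by
      open scoped MatrixOrder in
      obtain ⟨S', hS', -, hS'X⟩ := CFC.exists_sqrt_of_isSelfAdjoint_of_quasispectrumRestricts
        hX.isHermitian (QuasispectrumRestricts.nnreal_of_nonneg hX.nonneg)
      exact ⟨S', hS'.star_eq, hS'X⟩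
  obtain ⟨T, hT, hTY⟩ : ∃ T : Matrix (Fin n) (Fin n) ℝ, Tᵀ = T ∧ T * T = Y :=
    by
      open scoped MatrixOrder in
      obtain ⟨S', hS', -, hS'X⟩ := CFC.exists_sqrt_of_isSelfAdjoint_of_quasispectrumRestricts
        hY.isHermitian (QuasispectrumRestricts.nnreal_of_nonneg hY.nonneg)
      exact ⟨S', hS'.star_eq, hS'X⟩
  have : (X * Y).trace = ((S * T)ᵀ * (S * T)).trace := by
    rw [Matrix.transpose_mul, hS, hT]
    rw [← hSX, ← hTY, Matrix.trace_mul_comm, Matrix.mul_assoc, Matrix.trace_mul_comm]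
    simp [Matrix.mul_assoc]
  rw [this]
  exact trace_transpose_mul_self_nonneg _

/-- the dual objective `d_γ(u) = −(γ/2)‖(C(u))₊‖_F² − uᵀb − η²/(2γ)` is
concave on ℝ^q. -/
theorem sdp_dual_concave {n q : ℕ}
    (A : Matrix (Fin n) (Fin n) ℝ) (hA : A.IsSymm)
    (B : Fin q → Matrix (Fin n) (Fin n) ℝ) (hB : ∀ i, (B i).IsSymm)
    (b : Fin q → ℝ) (γ : ℝ) (hγ : 0 < γ) (η : ℝ)
    (P : (Fin q → ℝ) → Matrix (Fin n) (Fin n) ℝ)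
    (hP : ∀ u, (P u).PosSemidef)
    (hPC : ∀ u, (P u - (-A - ∑ i, u i • B i)).PosSemidef)
    (horth : ∀ u, ((P u)ᵀ * (P u - (-A - ∑ i, u i • B i))).trace = 0)
    (d : (Fin q → ℝ) → ℝ)
    (hd : ∀ u, d u = -(γ / 2) * ((P u)ᵀ * P u).trace - (∑ i, u i * b i) - η ^ 2 / (2 * γ)) :
    ConcaveOn ℝ Set.univ d := by
  set C : (Fin q → ℝ) → Matrix (Fin n) (Fin n) ℝ := fun u => -A - ∑ i, u i • B i with hC
  have key : ∀ x, ((P x)ᵀ * P x).trace = ((P x)ᵀ * C x).trace := by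
    intro x
    have h := horth x
    rw [Matrix.mul_sub, Matrix.trace_sub] at h
    linarith
  refine ⟨convex_univ, ?_⟩
  intro u _ v _ t s ht hs hts
  set w : Fin q → ℝ := t • u + s • v with hw
  have Caff : C w = t • C u + s • C v := by
    ext i j
    simp only [hC, Matrix.sub_apply, Matrix.neg_apply, Matrix.sum_apply,
      Matrix.smul_apply, Matrix.add_apply, smul_eq_mul, hw, Pi.add_apply, Pi.smul_apply]
    have e : ∀ k ∈ Finset.univ, (t * u k + s * v k) * B k i j
        = t * (u k * B k i j) + s * (v k * B k i j) := by intro k _; ring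
    rw [Finset.sum_congr rfl e, Finset.sum_add_distrib, ← Finset.mul_sum, ← Finset.mul_sum]
    linear_combination (A i j) * hts
  have htr : ∀ X Y : Matrix (Fin n) (Fin n) ℝ, (Xᵀ * Y).trace = (Yᵀ * X).trace := by
    intro X Y
    rw [← Matrix.trace_transpose (Xᵀ * Y), Matrix.transpose_mul, Matrix.transpose_transpose]
  have bound : ∀ x, ((P w)ᵀ * C x).trace
      ≤ (((P w)ᵀ * P w).trace + ((P x)ᵀ * P x).trace) / 2 := by
    intro x
    have h1 : 0 ≤ (P w * (P x - C x)).trace := trace_mul_psd_nonneg (hP w) (hPC x)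
    have hPw := psd_transpose_eq (hP w)
    rw [← hPw, Matrix.mul_sub, Matrix.trace_sub] at h1
    have h2 : 0 ≤ ((P w - P x)ᵀ * (P w - P x)).trace := trace_transpose_mul_self_nonneg _
    rw [Matrix.transpose_sub, Matrix.sub_mul, Matrix.mul_sub, Matrix.mul_sub,
      Matrix.trace_sub, Matrix.trace_sub, Matrix.trace_sub] at h2
    have h3 := htr (P x) (P w)
    linarith
  have Tw : ((P w)ᵀ * P w).trace
      ≤ t * ((P u)ᵀ * P u).trace + s * ((P v)ᵀ * P v).trace := by
    have e1 := key w
    rw [Caff, Matrix.mul_add, Matrix.mul_smul, Matrix.mul_smul, Matrix.trace_add,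
      Matrix.trace_smul, Matrix.trace_smul, smul_eq_mul, smul_eq_mul] at e1
    have b1 := bound u
    have b2 := bound v
    have hTw1 : t * ((P w)ᵀ * P w).trace + s * ((P w)ᵀ * P w).trace
        = ((P w)ᵀ * P w).trace := by rw [← add_mul, hts, one_mul]
    nlinarith [mul_le_mul_of_nonneg_left b1 ht, mul_le_mul_of_nonneg_left b2 hs]
  have sumlin : ∑ i, w i * b i = t * (∑ i, u i * b i) + s * (∑ i, v i * b i) := by
    rw [Finset.mul_sum, Finset.mul_sum, ← Finset.sum_add_distrib]
    refine Finset.sum_congr rfl fun k _ => ?_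
    simp only [hw, Pi.add_apply, Pi.smul_apply, smul_eq_mul]
    ring
  simp only [smul_eq_mul, hd, sumlin]
  have hc : t * (η ^ 2 / (2 * γ)) + s * (η ^ 2 / (2 * γ)) = η ^ 2 / (2 * γ) := by
    rw [← add_mul, hts, one_mul]
  nlinarith [mul_le_mul_of_nonneg_left Tw (by positivity : (0:ℝ) ≤ γ / 2), hc]
end
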